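/- Let M, D, A be symmetric real N×N matrices with M, D positive definite and A positive semidefinite, and let (u_dG, v_dG) solve the dG1 discrete problem with data f ∈ L²(0,T), initial data u₀, v₀. Then the stability bound holds: |(u_dG, v_dG)|²_B ≤ C (Σ_n ‖D^{-1/2} f‖²_{L²(I_n)} + |A^{1/2}u₀|² + |M^{1/2}v₀|²), where C is independent of the partition, the time steps, and the polynomial degrees r_n ≥ 1. -/

import Mathlib

open Matrix MeasureTheory

/-- A family of slab functions is a piecewise polynomial of degree `r n`
on each slab. -/
def IsPwPoly (d : ℕ) (r : ℕ → ℕ) (u : ℕ → ℝ → Fin d → ℝ) : Prop :=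
  ∀ n, ∃ p : Fin d → Polynomial ℝ,
    (∀ i, (p i).natDegree ≤ r n) ∧ ∀ s i, u n s i = (p i).eval s

/-- The dG1 bilinear form `ℬ((u,v),(w,z))` on a partition with nodes `t n`
and `N` slabs `I_n = (t n, t (n+1)]`. -/
noncomputable def dgB (d N : ℕ) (t : ℕ → ℝ) (M D A : Matrix (Fin d) (Fin d) ℝ)
    (u v w z : ℕ → ℝ → Fin d → ℝ) : ℝ :=
  (∑ n ∈ Finset.range N, ∫ s in (t n)..(t (n + 1)),
      (deriv (u n) s - v n s) ⬝ᵥ w n s)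
    + (∑ n ∈ Finset.Ico 1 N, (u n (t n) - u (n - 1) (t n)) ⬝ᵥ w n (t n))
    + u 0 (t 0) ⬝ᵥ w 0 (t 0)
    + (∑ n ∈ Finset.range N, ∫ s in (t n)..(t (n + 1)),
        (M.mulVec (deriv (v n) s) + D.mulVec (v n s) + A.mulVec (u n s)) ⬝ᵥ z n s)
    + (∑ n ∈ Finset.Ico 1 N, M.mulVec (v n (t n) - v (n - 1) (t n)) ⬝ᵥ z n (t n))
    + M.mulVec (v 0 (t 0)) ⬝ᵥ z 0 (t 0)

/-- The dG1 energy seminorm squared `|(u,v)|_ℬ²`; note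
`|M^{1/2} y|² = y ⬝ᵥ M y`, `|A^{1/2} y|² = y ⬝ᵥ A y` and the integrand
`|D^{1/2} v|² = v ⬝ᵥ D v`. -/
noncomputable def rhoSq (d N : ℕ) (t : ℕ → ℝ) (M D A : Matrix (Fin d) (Fin d) ℝ)
    (u v : ℕ → ℝ → Fin d → ℝ) : ℝ :=
  (∑ n ∈ Finset.range N, ∫ s in (t n)..(t (n + 1)), v n s ⬝ᵥ D.mulVec (v n s))
    + (1 / 2) * (v 0 (t 0) ⬝ᵥ M.mulVec (v 0 (t 0)))
    + (1 / 2) * ∑ n ∈ Finset.Ico 1 N,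
        (v n (t n) - v (n - 1) (t n)) ⬝ᵥ M.mulVec (v n (t n) - v (n - 1) (t n))
    + (1 / 2) * (v (N - 1) (t N) ⬝ᵥ M.mulVec (v (N - 1) (t N)))
    + (1 / 2) * (u 0 (t 0) ⬝ᵥ A.mulVec (u 0 (t 0)))
    + (1 / 2) * ∑ n ∈ Finset.Ico 1 N,
        (u n (t n) - u (n - 1) (t n)) ⬝ᵥ A.mulVec (u n (t n) - u (n - 1) (t n))
    + (1 / 2) * (u (N - 1) (t N) ⬝ᵥ A.mulVec (u (N - 1) (t N)))

section StabAux

variable {d : ℕ}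

private lemma quad_nonneg' {S : Matrix (Fin d) (Fin d) ℝ} (hS : S.PosSemidef) (x : Fin d → ℝ) :
    0 ≤ x ⬝ᵥ S.mulVec x := by simpa using hS.dotProduct_mulVec_nonneg x

private lemma herm_symm {S : Matrix (Fin d) (Fin d) ℝ} (hS : S.IsHermitian) : Sᵀ = S := by
  rwa [Matrix.IsHermitian, conjTranspose_eq_transpose_of_trivial] at hS

private lemma dot_symm' {S : Matrix (Fin d) (Fin d) ℝ} (hS : Sᵀ = S) (x y : Fin d → ℝ) :
    y ⬝ᵥ S.mulVec x = x ⬝ᵥ S.mulVec y := by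
  rw [Matrix.dotProduct_mulVec, ← Matrix.mulVec_transpose, hS, dotProduct_comm]

private lemma cs_psd' {S : Matrix (Fin d) (Fin d) ℝ} (hS : S.PosSemidef) (x y : Fin d → ℝ) :
    x ⬝ᵥ S.mulVec y ≤ x ⬝ᵥ S.mulVec x + (1/4) * (y ⬝ᵥ S.mulVec y) := by
  have hsym : Sᵀ = S := herm_symm hS.1
  have h0 : 0 ≤ (x - (1/2 : ℝ) • y) ⬝ᵥ S.mulVec (x - (1/2 : ℝ) • y) := by
    simpa using hS.dotProduct_mulVec_nonneg (x - (1/2 : ℝ) • y)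
  have hxy : y ⬝ᵥ S.mulVec x = x ⬝ᵥ S.mulVec y := dot_symm' hsym x y
  simp only [Matrix.mulVec_sub, Matrix.mulVec_smul, sub_dotProduct, dotProduct_sub,
    smul_dotProduct, dotProduct_smul, smul_eq_mul] at h0
  linarith

private lemma cs_inv' {D : Matrix (Fin d) (Fin d) ℝ} (hD : D.PosDef) (x y : Fin d → ℝ) :
    x ⬝ᵥ y ≤ D⁻¹.mulVec x ⬝ᵥ x + (1/4) * (y ⬝ᵥ D.mulVec y) := by
  have hsym : Dᵀ = D := herm_symm hD.1
  have hinv : D * D⁻¹ = 1 := Matrix.mul_nonsing_inv D (isUnit_iff_ne_zero.mpr hD.det_pos.ne')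
  have h := cs_psd' hD.posSemidef (D⁻¹.mulVec x) y
  have h1 : D.mulVec (D⁻¹.mulVec x) = x := by
    rw [Matrix.mulVec_mulVec, hinv, Matrix.one_mulVec]
  have h2 : D⁻¹.mulVec x ⬝ᵥ D.mulVec y = x ⬝ᵥ y := by
    rw [dot_symm' hsym, h1, dotProduct_comm]
  have h3 : D⁻¹.mulVec x ⬝ᵥ D.mulVec (D⁻¹.mulVec x) = D⁻¹.mulVec x ⬝ᵥ x := by rw [h1]
  rw [h2, h3] at h
  exact h

private lemma polyDeriv' (p : Fin d → Polynomial ℝ) :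
    deriv (fun x (i : Fin d) => (p i).eval x) = fun s i => (p i).derivative.eval s := by
  funext s
  exact (hasDerivAt_pi.2 fun i => (p i).hasDerivAt s).deriv

private lemma dot_cont' (g h : Fin d → Polynomial ℝ) (S : Matrix (Fin d) (Fin d) ℝ) :
    Continuous fun s => (fun i => (g i).eval s) ⬝ᵥ S.mulVec (fun i => (h i).eval s) := by
  simp only [dotProduct, Matrix.mulVec]
  refine continuous_finset_sum _ fun i _ => (Polynomial.continuous _).mul ?_
  exact continuous_finset_sum _ fun j _ => continuous_const.mul (Polynomial.continuous _)

private lemma ftc_quad' {S : Matrix (Fin d) (Fin d) ℝ} (hS : Sᵀ = S) (p : Fin d → Polynomial ℝ)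
    (a b : ℝ) :
    (∫ s in a..b, (fun i => (p i).derivative.eval s) ⬝ᵥ S.mulVec (fun i => (p i).eval s))
      = (1/2) * ((fun i => (p i).eval b) ⬝ᵥ S.mulVec (fun i => (p i).eval b))
        - (1/2) * ((fun i => (p i).eval a) ⬝ᵥ S.mulVec (fun i => (p i).eval a)) := by
  set F : ℝ → ℝ := fun s => (1/2) * ((fun i => (p i).eval s) ⬝ᵥ S.mulVec (fun i => (p i).eval s))
    with hF
  have hSij : ∀ i j, S j i = S i j := fun i j => by
    conv_rhs => rw [← hS]
    rfl
  have hderiv : ∀ s : ℝ, HasDerivAt F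
      ((fun i => (p i).derivative.eval s) ⬝ᵥ S.mulVec (fun i => (p i).eval s)) s := by
    intro s
    have h1 : HasDerivAt (fun x => (fun i => (p i).eval x) ⬝ᵥ S.mulVec (fun i => (p i).eval x))
        (∑ i, ((p i).derivative.eval s * ∑ j, S i j * (p j).eval s
          + (p i).eval s * ∑ j, S i j * (p j).derivative.eval s)) s := by
      simp only [dotProduct, Matrix.mulVec, Finset.sum_apply]
      apply HasDerivAt.fun_sum
      intro i _
      exact ((p i).hasDerivAt s).mul
        (HasDerivAt.fun_sum fun j _ => ((p j).hasDerivAt s).const_mul (S i j))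
    have key : (1/2) * (∑ i, ((p i).derivative.eval s * ∑ j, S i j * (p j).eval s
          + (p i).eval s * ∑ j, S i j * (p j).derivative.eval s))
        = (fun i => (p i).derivative.eval s) ⬝ᵥ S.mulVec (fun i => (p i).eval s) := by
      have hswap : ∑ i, (p i).eval s * ∑ j, S i j * (p j).derivative.eval s
          = ∑ i, (p i).derivative.eval s * ∑ j, S i j * (p j).eval s := by
        simp_rw [Finset.mul_sum]
        rw [Finset.sum_comm]
        refine Finset.sum_congr rfl fun i _ => Finset.sum_congr rfl fun j _ => ?_
        rw [hSij i j]
        ring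
      simp only [dotProduct, Matrix.mulVec, Finset.sum_apply]
      rw [Finset.sum_add_distrib, hswap]
      ring
    rw [← key]
    exact (h1.const_mul ((1:ℝ)/2))
  have hcont : Continuous fun s =>
      (fun i => (p i).derivative.eval s) ⬝ᵥ S.mulVec (fun i => (p i).eval s) :=
    dot_cont' (fun i => (p i).derivative) p S
  rw [intervalIntegral.integral_eq_sub_of_hasDerivAt (fun s _ => hderiv s)
    (hcont.intervalIntegrable _ _)]

private lemma bilin_id' {S : Matrix (Fin d) (Fin d) ℝ} (hS : Sᵀ = S) (x y : Fin d → ℝ) :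
    (1/2) * (y ⬝ᵥ S.mulVec y) - (1/2) * (x ⬝ᵥ S.mulVec x) + (x - y) ⬝ᵥ S.mulVec x
      = (1/2) * ((x - y) ⬝ᵥ S.mulVec (x - y)) := by
  have hxy : y ⬝ᵥ S.mulVec x = x ⬝ᵥ S.mulVec y := dot_symm' hS x y
  simp only [Matrix.mulVec_sub, sub_dotProduct, dotProduct_sub]
  linarith

private lemma telescope' {S : Matrix (Fin d) (Fin d) ℝ} (hS : Sᵀ = S) (N : ℕ) (hN : 1 ≤ N)
    (q : ℕ → ℕ → Fin d → ℝ) :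
    (∑ n ∈ Finset.range N,
        ((1/2) * (q n (n+1) ⬝ᵥ S.mulVec (q n (n+1))) - (1/2) * (q n n ⬝ᵥ S.mulVec (q n n))))
      + (∑ n ∈ Finset.Ico 1 N, (q n n - q (n-1) n) ⬝ᵥ S.mulVec (q n n))
      + q 0 0 ⬝ᵥ S.mulVec (q 0 0)
    = (1/2) * (q 0 0 ⬝ᵥ S.mulVec (q 0 0))
      + (1/2) * ∑ n ∈ Finset.Ico 1 N, ((q n n - q (n-1) n) ⬝ᵥ S.mulVec (q n n - q (n-1) n))
      + (1/2) * (q (N-1) N ⬝ᵥ S.mulVec (q (N-1) N)) := by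
  obtain ⟨K, rfl⟩ : ∃ K, N = K + 1 := ⟨N - 1, (Nat.succ_pred_eq_of_pos hN).symm⟩
  clear hN
  simp only [Nat.add_sub_cancel]
  induction K with
  | zero => simp; ring
  | succ K ih =>
    rw [Finset.sum_range_succ, Finset.sum_Ico_succ_top (by omega : 1 ≤ K + 1),
      Finset.sum_Ico_succ_top (by omega : 1 ≤ K + 1)]
    simp only [Nat.add_sub_cancel] at ih ⊢
    have hb := bilin_id' hS (q (K+1) (K+1)) (q K (K+1))
    linarith

private lemma slab_sum' {M D A : Matrix (Fin d) (Fin d) ℝ} (hM : Mᵀ = M) (hA : Aᵀ = A)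
    (p q : Fin d → Polynomial ℝ) (a b : ℝ) :
    (∫ s in a..b, (deriv (fun x (i : Fin d) => (p i).eval x) s - (fun i => (q i).eval s))
        ⬝ᵥ A.mulVec (fun i => (p i).eval s))
      + (∫ s in a..b, (M.mulVec (deriv (fun x (i : Fin d) => (q i).eval x) s)
          + D.mulVec (fun i => (q i).eval s) + A.mulVec (fun i => (p i).eval s))
          ⬝ᵥ (fun i => (q i).eval s))
    = ((1/2) * ((fun i => (p i).eval b) ⬝ᵥ A.mulVec (fun i => (p i).eval b))
        - (1/2) * ((fun i => (p i).eval a) ⬝ᵥ A.mulVec (fun i => (p i).eval a)))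
      + ((1/2) * ((fun i => (q i).eval b) ⬝ᵥ M.mulVec (fun i => (q i).eval b))
        - (1/2) * ((fun i => (q i).eval a) ⬝ᵥ M.mulVec (fun i => (q i).eval a)))
      + ∫ s in a..b, (fun i => (q i).eval s) ⬝ᵥ D.mulVec (fun i => (q i).eval s) := by
  rw [polyDeriv', polyDeriv']
  have h1 : ∀ s : ℝ, ((fun i => (p i).derivative.eval s) - (fun i => (q i).eval s))
        ⬝ᵥ A.mulVec (fun i => (p i).eval s)
      = (fun i => (p i).derivative.eval s) ⬝ᵥ A.mulVec (fun i => (p i).eval s)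
        - (fun i => (q i).eval s) ⬝ᵥ A.mulVec (fun i => (p i).eval s) := fun s => by
    rw [sub_dotProduct]
  have h2 : ∀ s : ℝ, (M.mulVec (fun i => (q i).derivative.eval s)
          + D.mulVec (fun i => (q i).eval s) + A.mulVec (fun i => (p i).eval s))
          ⬝ᵥ (fun i => (q i).eval s)
      = ((fun i => (q i).derivative.eval s) ⬝ᵥ M.mulVec (fun i => (q i).eval s)
          + (fun i => (q i).eval s) ⬝ᵥ D.mulVec (fun i => (q i).eval s))
        + (fun i => (q i).eval s) ⬝ᵥ A.mulVec (fun i => (p i).eval s) := fun s => by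
    rw [add_dotProduct, add_dotProduct]
    rw [dotProduct_comm (M.mulVec _), dot_symm' hM]
    rw [dotProduct_comm (D.mulVec _), dotProduct_comm (A.mulVec _)]
  simp only [h1, h2]
  rw [intervalIntegral.integral_sub
      ((dot_cont' (fun i => (p i).derivative) p A).intervalIntegrable _ _)
      ((dot_cont' q p A).intervalIntegrable _ _),
    intervalIntegral.integral_add
      (((dot_cont' (fun i => (q i).derivative) q M).intervalIntegrable _ _).add
        ((dot_cont' q q D).intervalIntegrable _ _))
      ((dot_cont' q p A).intervalIntegrable _ _),
    intervalIntegral.integral_add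
      ((dot_cont' (fun i => (q i).derivative) q M).intervalIntegrable _ _)
      ((dot_cont' q q D).intervalIntegrable _ _)]
  rw [ftc_quad' hA p a b, ftc_quad' hM q a b]
  ring

private lemma L2_mul_int' {μ : Measure ℝ} (g h : ℝ → ℝ) (hg : MemLp g 2 μ) (hh : MemLp h 2 μ) :
    Integrable (fun x => g x * h x) μ := by
  refine Integrable.mono' ((hg.integrable_sq.add hh.integrable_sq).const_mul (1/2))
    (hg.1.mul hh.1) ?_
  filter_upwards with x
  simp only [Pi.add_apply]
  rw [Real.norm_eq_abs, abs_mul]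
  nlinarith [sq_nonneg (|g x| - |h x|), sq_abs (g x), sq_abs (h x), abs_nonneg (g x),
    abs_nonneg (h x)]

private lemma comp_memLp' {T : ℝ} {f : ℝ → Fin d → ℝ}
    (hf : MemLp f 2 (volume.restrict (Set.Ioc (0:ℝ) T))) {a b : ℝ}
    (hsub : Set.Ioc a b ⊆ Set.Ioc 0 T) (i : Fin d) :
    MemLp (fun s => f s i) 2 (volume.restrict (Set.Ioc a b)) := by
  have hmono : volume.restrict (Set.Ioc a b) ≤ volume.restrict (Set.Ioc (0:ℝ) T) :=
    Measure.restrict_mono hsub le_rfl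
  have h2 := hf.mono_measure hmono
  exact h2.of_le ((continuous_apply i).comp_aestronglyMeasurable h2.1)
    (Filter.Eventually.of_forall fun s => norm_le_pi_norm (f s) i)

private lemma fin_meas' (a b : ℝ) : IsFiniteMeasure (volume.restrict (Set.Ioc a b)) :=
  ⟨by rw [Measure.restrict_apply_univ]; exact measure_Ioc_lt_top⟩

private lemma comp_integrable' {T : ℝ} {f : ℝ → Fin d → ℝ}
    (hf : MemLp f 2 (volume.restrict (Set.Ioc (0:ℝ) T))) {a b : ℝ}
    (hsub : Set.Ioc a b ⊆ Set.Ioc 0 T) (i : Fin d) :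
    Integrable (fun s => f s i) (volume.restrict (Set.Ioc a b)) := by
  haveI := fin_meas' a b
  exact memLp_one_iff_integrable.mp
    ((comp_memLp' hf hsub i).mono_exponent (by norm_num))

end StabAux


/-- Stability of the dG1 scheme: `|(u_dG, v_dG)|_ℬ² ≤ C (Σ_n ‖D^{-1/2} f‖²_{L²(I_n)}
+ |A^{1/2} u₀|² + |M^{1/2} v₀|²)`, with `C` independent of the partition, the
time steps, and the polynomial degrees `r n ≥ 1`.  Note
`‖D^{-1/2} f‖² = f ⬝ᵥ D⁻¹ f`, `|A^{1/2} u₀|² = u₀ ⬝ᵥ A u₀`,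
`|M^{1/2} v₀|² = v₀ ⬝ᵥ M v₀`. -/
theorem stmt17 (d : ℕ) (M D A : Matrix (Fin d) (Fin d) ℝ)
    (hM : M.PosDef) (hD : D.PosDef) (hA : A.PosSemidef) :
    ∃ C > (0 : ℝ), ∀ (N : ℕ), 1 ≤ N → ∀ (t : ℕ → ℝ) (T : ℝ),
      t 0 = 0 → t N = T → (∀ n < N, t n < t (n + 1)) →
      ∀ r : ℕ → ℕ, (∀ n, 1 ≤ r n) →
      ∀ f : ℝ → Fin d → ℝ,
        MeasureTheory.MemLp f 2 (volume.restrict (Set.Ioc (0 : ℝ) T)) →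
      ∀ (u₀ v₀ : Fin d → ℝ) (uh vh : ℕ → ℝ → Fin d → ℝ),
        IsPwPoly d r uh → IsPwPoly d r vh →
        (∀ w z : ℕ → ℝ → Fin d → ℝ, IsPwPoly d r w → IsPwPoly d r z →
          dgB d N t M D A uh vh w z
            = (∑ n ∈ Finset.range N, ∫ s in (t n)..(t (n + 1)), f s ⬝ᵥ z n s)
              + M.mulVec v₀ ⬝ᵥ z 0 (t 0) + u₀ ⬝ᵥ w 0 (t 0)) →
        rhoSq d N t M D A uh vh
          ≤ C * ((∑ n ∈ Finset.range N,
                ∫ s in (t n)..(t (n + 1)), D⁻¹.mulVec (f s) ⬝ᵥ f s)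
              + u₀ ⬝ᵥ A.mulVec u₀ + v₀ ⬝ᵥ M.mulVec v₀) := by
  have hMsym : Mᵀ = M := herm_symm hM.1
  have hAsym : Aᵀ = A := herm_symm hA.1
  refine ⟨2, by norm_num, ?_⟩
  intro N hN t T ht0 htN hlt r hr f hf u₀ v₀ uh vh huh hvh hB
  choose p hp using huh
  choose q hq using hvh
  have hvp : IsPwPoly d r vh := fun n => ⟨q n, (hq n).1, (hq n).2⟩
  have hu : ∀ n, uh n = fun s i => (p n i).eval s :=
    fun n => funext fun s => funext fun i => (hp n).2 s i
  have hv : ∀ n, vh n = fun s i => (q n i).eval s :=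
    fun n => funext fun s => funext fun i => (hq n).2 s i
  have hmono : ∀ i j : ℕ, i ≤ j → j ≤ N → t i ≤ t j := by
    intro i j hij hjN
    induction j with
    | zero => have : i = 0 := Nat.le_zero.mp hij; simp [this]
    | succ j ih =>
      rcases Nat.eq_or_lt_of_le hij with h | h
      · rw [h]
      · exact le_trans (ih (Nat.lt_succ_iff.mp h) (by omega)) (le_of_lt (hlt j (by omega)))
  have hab : ∀ n, n < N → t n ≤ t (n+1) := fun n hn => (hlt n hn).le
  have hwpoly : IsPwPoly d r (fun n s => A.mulVec (uh n s)) := by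
    intro n
    refine ⟨fun i => ∑ j, Polynomial.C (A i j) * p n j, fun i => ?_, fun s i => ?_⟩
    · exact Polynomial.natDegree_sum_le_of_forall_le _ _ fun j _ =>
        le_trans (Polynomial.natDegree_C_mul_le _ _) ((hp n).1 j)
    · simp only [Matrix.mulVec, dotProduct, hu n, Polynomial.eval_finset_sum,
        Polynomial.eval_mul, Polynomial.eval_C]
  have hBW := hB (fun n s => A.mulVec (uh n s)) vh hwpoly hvp
  simp only [dgB] at hBW
  have hslab : ∀ n, (∫ s in t n..t (n+1), (deriv (uh n) s - vh n s) ⬝ᵥ A.mulVec (uh n s))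
      + (∫ s in t n..t (n+1),
          (M.mulVec (deriv (vh n) s) + D.mulVec (vh n s) + A.mulVec (uh n s)) ⬝ᵥ vh n s)
    = ((1/2) * (uh n (t (n+1)) ⬝ᵥ A.mulVec (uh n (t (n+1))))
        - (1/2) * (uh n (t n) ⬝ᵥ A.mulVec (uh n (t n))))
      + ((1/2) * (vh n (t (n+1)) ⬝ᵥ M.mulVec (vh n (t (n+1))))
        - (1/2) * (vh n (t n) ⬝ᵥ M.mulVec (vh n (t n))))
      + ∫ s in t n..t (n+1), vh n s ⬝ᵥ D.mulVec (vh n s) := by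
    intro n
    rw [hu n, hv n]
    exact slab_sum' hMsym hAsym (p n) (q n) (t n) (t (n+1))
  have h14 : (∑ n ∈ Finset.range N,
        ∫ s in t n..t (n+1), (deriv (uh n) s - vh n s) ⬝ᵥ A.mulVec (uh n s))
      + (∑ n ∈ Finset.range N, ∫ s in t n..t (n+1),
          (M.mulVec (deriv (vh n) s) + D.mulVec (vh n s) + A.mulVec (uh n s)) ⬝ᵥ vh n s)
    = (∑ n ∈ Finset.range N, ((1/2) * (uh n (t (n+1)) ⬝ᵥ A.mulVec (uh n (t (n+1))))
        - (1/2) * (uh n (t n) ⬝ᵥ A.mulVec (uh n (t n)))))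
      + (∑ n ∈ Finset.range N, ((1/2) * (vh n (t (n+1)) ⬝ᵥ M.mulVec (vh n (t (n+1))))
        - (1/2) * (vh n (t n) ⬝ᵥ M.mulVec (vh n (t n)))))
      + ∑ n ∈ Finset.range N, ∫ s in t n..t (n+1), vh n s ⬝ᵥ D.mulVec (vh n s) := by
    rw [← Finset.sum_add_distrib, ← Finset.sum_add_distrib, ← Finset.sum_add_distrib]
    exact Finset.sum_congr rfl fun n _ => hslab n
  have hTA : (∑ n ∈ Finset.range N, ((1/2) * (uh n (t (n+1)) ⬝ᵥ A.mulVec (uh n (t (n+1))))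
        - (1/2) * (uh n (t n) ⬝ᵥ A.mulVec (uh n (t n)))))
      + (∑ n ∈ Finset.Ico 1 N, (uh n (t n) - uh (n-1) (t n)) ⬝ᵥ A.mulVec (uh n (t n)))
      + uh 0 (t 0) ⬝ᵥ A.mulVec (uh 0 (t 0))
    = (1/2) * (uh 0 (t 0) ⬝ᵥ A.mulVec (uh 0 (t 0)))
      + (1/2) * ∑ n ∈ Finset.Ico 1 N,
          ((uh n (t n) - uh (n-1) (t n)) ⬝ᵥ A.mulVec (uh n (t n) - uh (n-1) (t n)))
      + (1/2) * (uh (N-1) (t N) ⬝ᵥ A.mulVec (uh (N-1) (t N))) :=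
    telescope' hAsym N hN (fun n m => uh n (t m))
  have hTM : (∑ n ∈ Finset.range N, ((1/2) * (vh n (t (n+1)) ⬝ᵥ M.mulVec (vh n (t (n+1))))
        - (1/2) * (vh n (t n) ⬝ᵥ M.mulVec (vh n (t n)))))
      + (∑ n ∈ Finset.Ico 1 N, (vh n (t n) - vh (n-1) (t n)) ⬝ᵥ M.mulVec (vh n (t n)))
      + vh 0 (t 0) ⬝ᵥ M.mulVec (vh 0 (t 0))
    = (1/2) * (vh 0 (t 0) ⬝ᵥ M.mulVec (vh 0 (t 0)))
      + (1/2) * ∑ n ∈ Finset.Ico 1 N,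
          ((vh n (t n) - vh (n-1) (t n)) ⬝ᵥ M.mulVec (vh n (t n) - vh (n-1) (t n)))
      + (1/2) * (vh (N-1) (t N) ⬝ᵥ M.mulVec (vh (N-1) (t N))) :=
    telescope' hMsym N hN (fun n m => vh n (t m))
  have hS5 : (∑ n ∈ Finset.Ico 1 N, M.mulVec (vh n (t n) - vh (n-1) (t n)) ⬝ᵥ vh n (t n))
      = ∑ n ∈ Finset.Ico 1 N, (vh n (t n) - vh (n-1) (t n)) ⬝ᵥ M.mulVec (vh n (t n)) :=
    Finset.sum_congr rfl fun n _ => by rw [dotProduct_comm, dot_symm' hMsym]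
  have hS6 : M.mulVec (vh 0 (t 0)) ⬝ᵥ vh 0 (t 0) = vh 0 (t 0) ⬝ᵥ M.mulVec (vh 0 (t 0)) := by
    rw [dotProduct_comm]
  have hkey : rhoSq d N t M D A uh vh
      = (∑ n ∈ Finset.range N, ∫ s in t n..t (n+1), f s ⬝ᵥ vh n s)
        + M.mulVec v₀ ⬝ᵥ vh 0 (t 0) + u₀ ⬝ᵥ A.mulVec (uh 0 (t 0)) := by
    simp only [rhoSq]
    rw [hS5, hS6] at hBW
    linarith [hBW, h14, hTA, hTM]
  have hsub : ∀ n, n < N → Set.Ioc (t n) (t (n+1)) ⊆ Set.Ioc 0 T := by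
    intro n hn x hx
    exact ⟨lt_of_le_of_lt (by rw [← ht0]; exact hmono 0 n (Nat.zero_le n) (by omega)) hx.1,
      le_trans hx.2 (by rw [← htN]; exact hmono (n+1) N (by omega) le_rfl)⟩
  have hfvle : ∀ n, n < N → (∫ s in t n..t (n+1), f s ⬝ᵥ vh n s)
      ≤ (∫ s in t n..t (n+1), D⁻¹.mulVec (f s) ⬝ᵥ f s)
        + (1/4) * ∫ s in t n..t (n+1), vh n s ⬝ᵥ D.mulVec (vh n s) := by
    intro n hn
    have habn := hab n hn
    have hsubn := hsub n hn
    have hvi_cont : ∀ i, Continuous fun s => vh n s i := by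
      intro i
      rw [hv n]
      exact Polynomial.continuous _
    have hfv_int : IntervalIntegrable (fun s => f s ⬝ᵥ vh n s) volume (t n) (t (n+1)) := by
      have hform : (fun s => f s ⬝ᵥ vh n s) = (∑ i : Fin d, fun s => f s i * vh n s i) := by
        funext s; simp [dotProduct]
      rw [hform]
      refine IntervalIntegrable.sum _ fun i _ => ?_
      have hfi : IntervalIntegrable (fun s => f s i) volume (t n) (t (n+1)) :=
        (intervalIntegrable_iff_integrableOn_Ioc_of_le habn).mpr (comp_integrable' hf hsubn i)
      exact hfi.mul_continuousOn (hvi_cont i).continuousOn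
    have hvDv_cont : Continuous fun s => vh n s ⬝ᵥ D.mulVec (vh n s) := by
      rw [hv n]
      exact dot_cont' (q n) (q n) D
    have hDff_int : IntervalIntegrable (fun s => D⁻¹.mulVec (f s) ⬝ᵥ f s)
        volume (t n) (t (n+1)) := by
      rw [intervalIntegrable_iff_integrableOn_Ioc_of_le habn]
      have hform : (fun s => D⁻¹.mulVec (f s) ⬝ᵥ f s)
          = fun s => ∑ i : Fin d, ∑ j : Fin d, D⁻¹ i j * (f s j * f s i) := by
        funext s
        simp [dotProduct, Matrix.mulVec, Finset.sum_mul, mul_assoc]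
      rw [hform]
      exact integrable_finset_sum _ fun i _ => integrable_finset_sum _ fun j _ =>
        ((L2_mul_int' _ _ (comp_memLp' hf hsubn j) (comp_memLp' hf hsubn i)).const_mul _)
    calc (∫ s in t n..t (n+1), f s ⬝ᵥ vh n s)
        ≤ ∫ s in t n..t (n+1),
            (D⁻¹.mulVec (f s) ⬝ᵥ f s + (1/4) * (vh n s ⬝ᵥ D.mulVec (vh n s))) := by
          refine intervalIntegral.integral_mono_on habn hfv_int
            (hDff_int.add ((continuous_const.mul hvDv_cont).intervalIntegrable _ _)) ?_
          exact fun x _ => cs_inv' hD (f x) (vh n x)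
      _ = _ := by
          rw [intervalIntegral.integral_add hDff_int
            ((hvDv_cont.intervalIntegrable _ _).const_mul (1/4 : ℝ)),
            intervalIntegral.integral_const_mul]
  have hsumfv : (∑ n ∈ Finset.range N, ∫ s in t n..t (n+1), f s ⬝ᵥ vh n s)
      ≤ (∑ n ∈ Finset.range N, ∫ s in t n..t (n+1), D⁻¹.mulVec (f s) ⬝ᵥ f s)
        + (1/4) * ∑ n ∈ Finset.range N, ∫ s in t n..t (n+1), vh n s ⬝ᵥ D.mulVec (vh n s) := by
    rw [Finset.mul_sum, ← Finset.sum_add_distrib]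
    exact Finset.sum_le_sum fun n hn => hfvle n (Finset.mem_range.mp hn)
  have hm0 : M.mulVec v₀ ⬝ᵥ vh 0 (t 0)
      ≤ v₀ ⬝ᵥ M.mulVec v₀ + (1/4) * (vh 0 (t 0) ⬝ᵥ M.mulVec (vh 0 (t 0))) := by
    rw [dotProduct_comm, dot_symm' hMsym]
    exact cs_psd' hM.posSemidef v₀ (vh 0 (t 0))
  have ha0 : u₀ ⬝ᵥ A.mulVec (uh 0 (t 0))
      ≤ u₀ ⬝ᵥ A.mulVec u₀ + (1/4) * (uh 0 (t 0) ⬝ᵥ A.mulVec (uh 0 (t 0))) :=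
    cs_psd' hA u₀ (uh 0 (t 0))
  have hDsum_nn : 0 ≤ ∑ n ∈ Finset.range N, ∫ s in t n..t (n+1), vh n s ⬝ᵥ D.mulVec (vh n s) :=
    Finset.sum_nonneg fun n hn =>
      intervalIntegral.integral_nonneg (hab n (Finset.mem_range.mp hn))
        fun x _ => quad_nonneg' hD.posSemidef _
  have hP2 : 0 ≤ vh 0 (t 0) ⬝ᵥ M.mulVec (vh 0 (t 0)) := quad_nonneg' hM.posSemidef _
  have hP3 : 0 ≤ ∑ n ∈ Finset.Ico 1 N,
      ((vh n (t n) - vh (n-1) (t n)) ⬝ᵥ M.mulVec (vh n (t n) - vh (n-1) (t n))) :=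
    Finset.sum_nonneg fun n _ => quad_nonneg' hM.posSemidef _
  have hP4 : 0 ≤ vh (N-1) (t N) ⬝ᵥ M.mulVec (vh (N-1) (t N)) := quad_nonneg' hM.posSemidef _
  have hP5 : 0 ≤ uh 0 (t 0) ⬝ᵥ A.mulVec (uh 0 (t 0)) := quad_nonneg' hA _
  have hP6 : 0 ≤ ∑ n ∈ Finset.Ico 1 N,
      ((uh n (t n) - uh (n-1) (t n)) ⬝ᵥ A.mulVec (uh n (t n) - uh (n-1) (t n))) :=
    Finset.sum_nonneg fun n _ => quad_nonneg' hA _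
  have hP7 : 0 ≤ uh (N-1) (t N) ⬝ᵥ A.mulVec (uh (N-1) (t N)) := quad_nonneg' hA _
  have hdecomp : rhoSq d N t M D A uh vh
      = (∑ n ∈ Finset.range N, ∫ s in t n..t (n+1), vh n s ⬝ᵥ D.mulVec (vh n s))
        + (1/2) * (vh 0 (t 0) ⬝ᵥ M.mulVec (vh 0 (t 0)))
        + (1/2) * ∑ n ∈ Finset.Ico 1 N,
            ((vh n (t n) - vh (n-1) (t n)) ⬝ᵥ M.mulVec (vh n (t n) - vh (n-1) (t n)))
        + (1/2) * (vh (N-1) (t N) ⬝ᵥ M.mulVec (vh (N-1) (t N)))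
        + (1/2) * (uh 0 (t 0) ⬝ᵥ A.mulVec (uh 0 (t 0)))
        + (1/2) * ∑ n ∈ Finset.Ico 1 N,
            ((uh n (t n) - uh (n-1) (t n)) ⬝ᵥ A.mulVec (uh n (t n) - uh (n-1) (t n)))
        + (1/2) * (uh (N-1) (t N) ⬝ᵥ A.mulVec (uh (N-1) (t N))) := rfl
  linarith [hkey, hsumfv, hm0, ha0, hdecomp, hDsum_nn, hP2, hP3, hP4, hP5, hP6, hP7]
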